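/- For Hermite polynomials and n ≥ 1, the diagonal integral a_{n,n}(x) := ∫_{-∞}^x e^{-y²} H_n(y)² dy satisfies a_{n,n}(x) = −H_{n-1}(x) H_n(x) e^{-x²} + 2n · a_{n-1,n-1}(x), with a_{0,0}(x) = √π · Φ(√2 x), where Φ is the standard normal cumulative distribution function. -/

import Mathlib

open MeasureTheory

/-- Physicists' Hermite polynomials. -/
noncomputable def hermite : ℕ → ℝ → ℝ
  | 0, _ => 1
  | 1, x => 2 * x
  | n + 2, x => 2 * x * hermite (n + 1) x - 2 * ((n : ℝ) + 1) * hermite n x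

/-- `a_{n,n}(x) = ∫_{-∞}^x e^{-y²} H_n(y)² dy`. -/
noncomputable def hermiteDiag (n : ℕ) (x : ℝ) : ℝ :=
  ∫ y in Set.Iic x, Real.exp (-y ^ 2) * (hermite n y) ^ 2

/-- Standard normal cumulative distribution function. -/
noncomputable def stdNormalCdf (x : ℝ) : ℝ :=
  (Real.sqrt (2 * Real.pi))⁻¹ * ∫ t in Set.Iic x, Real.exp (-t ^ 2 / 2)

open Filter Real Set

lemma hermite_zero (x : ℝ) : hermite 0 x = 1 := rfl

lemma hermite_one (x : ℝ) : hermite 1 x = 2 * x := rfl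

lemma hermite_add_two (n : ℕ) (x : ℝ) :
    hermite (n + 2) x = 2 * x * hermite (n + 1) x - 2 * ((n : ℝ) + 1) * hermite n x := rfl

lemma hermite_succ (n : ℕ) (x : ℝ) :
    hermite (n + 1) x = 2 * x * hermite n x - 2 * (n : ℝ) * hermite (n - 1) x := by
  cases n with
  | zero => simp [hermite_one, hermite_zero]
  | succ m =>
    rw [hermite_add_two]
    push_cast
    norm_num

lemma hermite_hasDerivAt : ∀ (n : ℕ) (x : ℝ),
    HasDerivAt (fun y => hermite n y) (2 * (n : ℝ) * hermite (n - 1) x) x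
  | 0, x => by
    have h : HasDerivAt (fun _ : ℝ => (1 : ℝ)) 0 x := hasDerivAt_const x 1
    simpa [hermite_zero] using h
  | 1, x => by
    have h : HasDerivAt (fun y : ℝ => 2 * y) (2 * 1) x := (hasDerivAt_id x).const_mul 2
    simpa [hermite_one, hermite_zero] using h
  | (n + 2), x => by
    have h1 := hermite_hasDerivAt (n + 1) x
    have h0 := hermite_hasDerivAt n x
    have hx : HasDerivAt (fun y : ℝ => 2 * y) 2 x := by
      simpa using (hasDerivAt_id x).const_mul (2 : ℝ)
    have H := (hx.mul h1).sub (h0.const_mul (2 * ((n : ℝ) + 1)))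
    have funeq : (fun y => 2 * y * hermite (n + 1) y - 2 * ((n : ℝ) + 1) * hermite n y)
        = fun y => hermite (n + 2) y := by
      funext y; rw [hermite_add_two]
    replace H : HasDerivAt (fun y => 2 * y * hermite (n + 1) y - 2 * ((n : ℝ) + 1) * hermite n y) _ x := H
    rw [funeq] at H
    convert H using 1
    have hs := hermite_succ n x
    push_cast
    linear_combination (2 * (n : ℝ) + 2) * hs

lemma hermite_continuous (n : ℕ) : Continuous (fun y => hermite n y) := by
  have h : Differentiable ℝ (fun y => hermite n y) :=
    fun y => (hermite_hasDerivAt n y).differentiableAt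
  exact h.continuous

lemma hermite_bound : ∀ n : ℕ, ∃ C : ℝ, 0 ≤ C ∧ ∀ y : ℝ, |hermite n y| ≤ C * (1 + |y|) ^ n
  | 0 => ⟨1, zero_le_one, fun y => by simp [hermite_zero]⟩
  | 1 => ⟨2, by norm_num, fun y => by
      rw [hermite_one, abs_mul]
      have := abs_nonneg y
      rw [abs_of_nonneg (by norm_num : (0:ℝ) ≤ 2)]
      nlinarith⟩
  | (n + 2) => by
    obtain ⟨C1, hC1, h1⟩ := hermite_bound (n + 1)
    obtain ⟨C0, hC0, h0⟩ := hermite_bound n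
    refine ⟨2 * C1 + 2 * ((n : ℝ) + 1) * C0, by positivity, fun y => ?_⟩
    rw [hermite_add_two]
    have ht1 : (1 : ℝ) ≤ 1 + |y| := le_add_of_nonneg_right (abs_nonneg y)
    have ht0 : (0 : ℝ) ≤ 1 + |y| := le_trans zero_le_one ht1
    have habs : |y| ≤ 1 + |y| := by linarith
    have b1 : |hermite (n + 1) y| ≤ C1 * (1 + |y|) ^ (n + 1) := h1 y
    have b0 : |hermite n y| ≤ C0 * (1 + |y|) ^ n := h0 y
    have hpow : (1 + |y|) ^ n ≤ (1 + |y|) ^ (n + 2) := pow_le_pow_right₀ ht1 (by omega)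
    have key1 : |2 * y * hermite (n + 1) y| ≤ 2 * C1 * (1 + |y|) ^ (n + 2) := by
      rw [abs_mul, abs_mul, abs_of_nonneg (by norm_num : (0:ℝ) ≤ 2)]
      calc 2 * |y| * |hermite (n + 1) y| ≤ 2 * (1 + |y|) * (C1 * (1 + |y|) ^ (n + 1)) := by
            apply mul_le_mul _ b1 (abs_nonneg _) (by positivity)
            nlinarith [abs_nonneg y]
        _ = 2 * C1 * (1 + |y|) ^ (n + 2) := by ring
    have key0 : |2 * ((n : ℝ) + 1) * hermite n y|
        ≤ 2 * ((n : ℝ) + 1) * C0 * (1 + |y|) ^ (n + 2) := by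
      rw [abs_mul, abs_of_nonneg (by positivity : (0:ℝ) ≤ 2 * ((n : ℝ) + 1))]
      calc 2 * ((n : ℝ) + 1) * |hermite n y|
          ≤ 2 * ((n : ℝ) + 1) * (C0 * (1 + |y|) ^ n) := by
            apply mul_le_mul_of_nonneg_left b0 (by positivity)
        _ ≤ 2 * ((n : ℝ) + 1) * C0 * (1 + |y|) ^ (n + 2) := by
            rw [mul_assoc (2 * ((n : ℝ) + 1))]
            apply mul_le_mul_of_nonneg_left _ (by positivity)
            exact mul_le_mul_of_nonneg_left hpow hC0
    calc |2 * y * hermite (n + 1) y - 2 * ((n : ℝ) + 1) * hermite n y|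
        ≤ |2 * y * hermite (n + 1) y| + |2 * ((n : ℝ) + 1) * hermite n y| := abs_sub _ _
      _ ≤ 2 * C1 * (1 + |y|) ^ (n + 2) + 2 * ((n : ℝ) + 1) * C0 * (1 + |y|) ^ (n + 2) :=
          add_le_add key1 key0
      _ = (2 * C1 + 2 * ((n : ℝ) + 1) * C0) * (1 + |y|) ^ (n + 2) := by ring

lemma tendsto_onePlusAbs_pow_mul_gauss (k : ℕ) {b : ℝ} (hb : 0 < b) :
    Tendsto (fun y : ℝ => (1 + |y|) ^ k * Real.exp (-b * y ^ 2)) (cocompact ℝ) (nhds 0) := by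
  have h : (fun y : ℝ => (1 + |y|) ^ k * Real.exp (-b * y ^ 2))
      = fun y => ∑ m ∈ Finset.range (k + 1),
          (k.choose m : ℝ) * (|y| ^ (((k - m : ℕ) : ℝ)) * Real.exp (-b * y ^ 2)) := by
    funext y
    rw [add_pow, Finset.sum_mul]
    refine Finset.sum_congr rfl fun m _ => ?_
    rw [Real.rpow_natCast]
    ring
  rw [h]
  have H := tendsto_finset_sum (Finset.range (k + 1)) fun m (_ : m ∈ Finset.range (k + 1)) =>
    (tendsto_rpow_abs_mul_exp_neg_mul_sq_cocompact hb ((k - m : ℕ) : ℝ)).const_mul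
      (k.choose m : ℝ)
  simpa using H

lemma exists_gauss_bound (k : ℕ) : ∃ M : ℝ, 0 ≤ M ∧ ∀ y : ℝ,
    (1 + |y|) ^ k * Real.exp (-(1 / 2 : ℝ) * y ^ 2) ≤ M := by
  set g : ℝ → ℝ := fun y => (1 + |y|) ^ k * Real.exp (-(1 / 2 : ℝ) * y ^ 2) with hg
  have hgc : Continuous g := by
    apply Continuous.mul
    · exact (continuous_const.add continuous_abs).pow k
    · exact (Continuous.mul continuous_const (continuous_pow 2)).rexp
  have ht := tendsto_onePlusAbs_pow_mul_gauss k (by norm_num : (0 : ℝ) < 1 / 2)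
  have h1 : ∀ᶠ y in cocompact ℝ, g y < 1 := ht.eventually_lt_const one_pos
  obtain ⟨K, hK, hKs⟩ := Filter.mem_cocompact.mp h1
  obtain ⟨M0, hM0⟩ := hK.exists_bound_of_continuousOn hgc.continuousOn
  refine ⟨max M0 1, le_trans zero_le_one (le_max_right _ _), fun y => ?_⟩
  by_cases hy : y ∈ K
  · exact le_trans (le_trans (le_abs_self _) (hM0 y hy)) (le_max_left _ _)
  · exact le_trans (le_of_lt (hKs hy)) (le_max_right _ _)

lemma integrable_gauss_poly (k : ℕ) {C : ℝ} (hC : 0 ≤ C) (f : ℝ → ℝ) (hf : Continuous f)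
    (hbound : ∀ y, |f y| ≤ C * (1 + |y|) ^ k) :
    Integrable (fun y : ℝ => f y * Real.exp (-y ^ 2)) := by
  obtain ⟨M, hM0, hM⟩ := exists_gauss_bound k
  apply Integrable.mono'
    ((integrable_exp_neg_mul_sq (by norm_num : (0 : ℝ) < 1 / 2)).const_mul (C * M))
  · exact (hf.mul (continuous_pow 2).neg.rexp).aestronglyMeasurable
  · refine Filter.Eventually.of_forall fun y => ?_
    have hsplit : Real.exp (-y ^ 2)
        = Real.exp (-(1 / 2 : ℝ) * y ^ 2) * Real.exp (-(1 / 2 : ℝ) * y ^ 2) := by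
      rw [← Real.exp_add]; ring_nf
    rw [norm_mul, Real.norm_eq_abs, Real.norm_eq_abs, abs_of_pos (Real.exp_pos _)]
    calc |f y| * Real.exp (-y ^ 2) ≤ (C * (1 + |y|) ^ k) * Real.exp (-y ^ 2) :=
          mul_le_mul_of_nonneg_right (hbound y) (Real.exp_pos _).le
      _ = C * ((1 + |y|) ^ k * Real.exp (-(1 / 2 : ℝ) * y ^ 2))
            * Real.exp (-(1 / 2 : ℝ) * y ^ 2) := by rw [hsplit]; ring
      _ ≤ C * M * Real.exp (-(1 / 2 : ℝ) * y ^ 2) := by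
          apply mul_le_mul_of_nonneg_right _ (Real.exp_pos _).le
          exact mul_le_mul_of_nonneg_left (hM y) hC

lemma integrable_hermite_mul (n m : ℕ) :
    Integrable (fun y : ℝ => hermite n y * hermite m y * Real.exp (-y ^ 2)) := by
  obtain ⟨Cn, hCn, hn⟩ := hermite_bound n
  obtain ⟨Cm, hCm, hm⟩ := hermite_bound m
  refine integrable_gauss_poly (n + m) (by positivity : (0:ℝ) ≤ Cn * Cm)
    _ ((hermite_continuous n).mul (hermite_continuous m)) fun y => ?_
  rw [abs_mul, pow_add, show Cn * Cm * ((1 + |y|) ^ n * (1 + |y|) ^ m)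
      = (Cn * (1 + |y|) ^ n) * (Cm * (1 + |y|) ^ m) by ring]
  exact mul_le_mul (hn y) (hm y) (abs_nonneg _) (by positivity)

lemma tendsto_hermite_mul_gauss_atBot (n m : ℕ) :
    Tendsto (fun y : ℝ => hermite n y * hermite m y * Real.exp (-y ^ 2)) atBot (nhds 0) := by
  obtain ⟨Cn, hCn, hn⟩ := hermite_bound n
  obtain ⟨Cm, hCm, hm⟩ := hermite_bound m
  have hb : Tendsto (fun y : ℝ => Cn * Cm * ((1 + |y|) ^ (n + m) * Real.exp (-1 * y ^ 2)))
      atBot (nhds 0) := by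
    have hle : (Filter.atBot : Filter ℝ) ≤ Filter.cocompact ℝ := by
      rw [cocompact_eq_atBot_atTop]
      exact le_sup_left
    have h2 := ((tendsto_onePlusAbs_pow_mul_gauss (n + m)
        (by norm_num : (0:ℝ) < 1)).const_mul (Cn * Cm)).mono_left hle
    simpa using h2
  apply squeeze_zero_norm _ hb
  intro y
  rw [Real.norm_eq_abs, abs_mul, abs_mul, abs_of_pos (Real.exp_pos _), neg_one_mul]
  calc |hermite n y| * |hermite m y| * Real.exp (-y ^ 2)
      ≤ (Cn * (1 + |y|) ^ n) * (Cm * (1 + |y|) ^ m) * Real.exp (-y ^ 2) := by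
        apply mul_le_mul_of_nonneg_right _ (Real.exp_pos _).le
        exact mul_le_mul (hn y) (hm y) (abs_nonneg _) (by positivity)
    _ = Cn * Cm * ((1 + |y|) ^ (n + m) * Real.exp (-y ^ 2)) := by rw [pow_add]; ring

theorem hermiteDiag_recursion (x : ℝ) :
    hermiteDiag 0 x = Real.sqrt Real.pi * stdNormalCdf (Real.sqrt 2 * x) ∧
      ∀ n : ℕ, 1 ≤ n →
        hermiteDiag n x =
          -(hermite (n - 1) x * hermite n x * Real.exp (-x ^ 2)) +
            2 * (n : ℝ) * hermiteDiag (n - 1) x := by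
  constructor
  · -- base case
    have h0 : hermiteDiag 0 x = ∫ y in Set.Iic x, Real.exp (-y ^ 2) := by
      unfold hermiteDiag
      congr 1
      funext y
      rw [hermite_zero]
      ring
    rw [h0]
    set g : ℝ → ℝ := (Set.Iic (Real.sqrt 2 * x)).indicator fun t => Real.exp (-t ^ 2 / 2)
      with hgdef
    have hs2 : (0 : ℝ) < Real.sqrt 2 := Real.sqrt_pos.mpr (by norm_num)
    have hcomp : ∀ y : ℝ, g (Real.sqrt 2 * y)
        = (Set.Iic x).indicator (fun y : ℝ => Real.exp (-y ^ 2)) y := by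
      intro y
      have hiff : Real.sqrt 2 * y ≤ Real.sqrt 2 * x ↔ y ≤ x := by
        constructor
        · intro h; exact le_of_mul_le_mul_left h hs2
        · intro h; exact mul_le_mul_of_nonneg_left h hs2.le
      have hsq : (Real.sqrt 2 * y) ^ 2 = 2 * y ^ 2 := by
        rw [mul_pow, Real.sq_sqrt (by norm_num : (0:ℝ) ≤ 2)]
      by_cases hy : y ≤ x
      · rw [hgdef]
        simp only [Set.indicator_apply, Set.mem_Iic, if_pos (hiff.mpr hy), if_pos hy, hsq]
        ring_nf
      · rw [hgdef]
        simp only [Set.indicator_apply, Set.mem_Iic,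
          if_neg (fun h => hy (hiff.mp h)), if_neg hy]
    have hint : (∫ y in Set.Iic x, Real.exp (-y ^ 2))
        = |(Real.sqrt 2)⁻¹| • ∫ t in Set.Iic (Real.sqrt 2 * x), Real.exp (-t ^ 2 / 2) := by
      rw [← integral_indicator measurableSet_Iic, ← integral_indicator measurableSet_Iic]
      calc (∫ y, (Set.Iic x).indicator (fun y : ℝ => Real.exp (-y ^ 2)) y)
          = ∫ y, g (Real.sqrt 2 * y) := by
            congr 1; funext y; rw [hcomp y]
        _ = |(Real.sqrt 2)⁻¹| • ∫ t, g t := MeasureTheory.Measure.integral_comp_mul_left g _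
    rw [hint, stdNormalCdf]
    rw [abs_of_pos (inv_pos.mpr hs2), smul_eq_mul]
    have hpi : Real.sqrt (2 * Real.pi) = Real.sqrt 2 * Real.sqrt Real.pi :=
      Real.sqrt_mul (by norm_num) _
    rw [hpi]
    have hppos : (0 : ℝ) < Real.sqrt Real.pi := Real.sqrt_pos.mpr Real.pi_pos
    field_simp
  · -- recursion
    intro n hn
    obtain ⟨m, rfl⟩ := Nat.exists_eq_add_of_le hn
    have hmm : 1 + m - 1 = m := by omega
    rw [hmm]
    have hm1 : 1 + m = m + 1 := by omega
    rw [hm1]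
    -- the function and its derivative
    set F : ℝ → ℝ := fun y => -(hermite m y * hermite (m + 1) y * Real.exp (-y ^ 2)) with hF
    have hderiv : ∀ y : ℝ, HasDerivAt F
        (Real.exp (-y ^ 2) * hermite (m + 1) y ^ 2
          - 2 * ((m : ℝ) + 1) * (Real.exp (-y ^ 2) * hermite m y ^ 2)) y := by
      intro y
      have hP : HasDerivAt (fun y => hermite m y * hermite (m + 1) y)
          (2 * (m : ℝ) * hermite (m - 1) y * hermite (m + 1) y
            + hermite m y * (2 * ((m + 1 : ℕ) : ℝ) * hermite m y)) y := by
        have := (hermite_hasDerivAt m y).mul (hermite_hasDerivAt (m + 1) y)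
        simp at this ⊢
        exact this
      have hE : HasDerivAt (fun y : ℝ => Real.exp (-y ^ 2))
          (Real.exp (-y ^ 2) * (-(2 * y))) y := by
        have h2 : HasDerivAt (fun y : ℝ => -y ^ 2) (-(2 * y)) y := by
          have h3 := (hasDerivAt_pow 2 y).neg
          simp at h3
          exact h3
        exact h2.exp
      have H : HasDerivAt F _ y := (hP.mul hE).neg
      convert H using 1
      have hs := hermite_succ m y
      push_cast at hs ⊢
      linear_combination (Real.exp (-y ^ 2) * hermite (m + 1) y) * hs
    have hint1 : Integrable (fun y : ℝ => Real.exp (-y ^ 2) * hermite (m + 1) y ^ 2) := by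
      have := integrable_hermite_mul (m + 1) (m + 1)
      apply this.congr
      refine Filter.Eventually.of_forall fun y => ?_
      ring
    have hint0 : Integrable (fun y : ℝ => Real.exp (-y ^ 2) * hermite m y ^ 2) := by
      have := integrable_hermite_mul m m
      apply this.congr
      refine Filter.Eventually.of_forall fun y => ?_
      ring
    have hintD : IntegrableOn (fun y : ℝ =>
        Real.exp (-y ^ 2) * hermite (m + 1) y ^ 2
          - 2 * ((m : ℝ) + 1) * (Real.exp (-y ^ 2) * hermite m y ^ 2)) (Set.Iic x) :=
      ((hint1.sub (hint0.const_mul _)).integrableOn)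
    have htend : Tendsto F atBot (nhds 0) := by
      have := (tendsto_hermite_mul_gauss_atBot m (m + 1)).neg
      rw [neg_zero] at this
      exact this
    have hFTC := MeasureTheory.integral_Iic_of_hasDerivAt_of_tendsto'
      (fun y _ => hderiv y) hintD htend
    have hsplit : (∫ y in Set.Iic x,
        (Real.exp (-y ^ 2) * hermite (m + 1) y ^ 2
          - 2 * ((m : ℝ) + 1) * (Real.exp (-y ^ 2) * hermite m y ^ 2)))
        = hermiteDiag (m + 1) x - 2 * ((m : ℝ) + 1) * hermiteDiag m x := by
      rw [MeasureTheory.integral_sub hint1.integrableOn ((hint0.const_mul _).integrableOn),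
        MeasureTheory.integral_const_mul]
      rfl
    rw [hsplit] at hFTC
    rw [hF] at hFTC
    simp only [sub_zero] at hFTC
    push_cast
    linarith [hFTC]
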